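/- Let π be a policy that reaches the goal everywhere and let π' be a policy that is optimal with respect to the reward −d^π. If d^{π'}(s) = d^π(s) for every state s, then d^π(s) = d*(s) for every state s, i.e., π achieves the optimal dynamical distance to the goal from every state. -/

import Mathlib

/-- The step map induced by policy `π` in a deterministic MDP with transition `T`. -/
def stepMap {S A : Type*} (T : S → A → S) (π : S → A) : S → S := fun s => T s (π s)

/-- The dynamical distance `d^π(s)`: the least `n : ℕ` with `(stepMap T π)^[n] s = g`,
and `⊤` (infinity) if no such `n` exists. -/
noncomputable def dynDist {S A : Type*} (T : S → A → S) (g : S) (π : S → A) (s : S) : ℕ∞ :=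
  sInf {n : ℕ∞ | ∃ m : ℕ, n = (m : ℕ∞) ∧ (stepMap T π)^[m] s = g}

/-- `π` reaches the goal everywhere: the dynamical distance is finite from every state. -/
def ReachesEverywhere {S A : Type*} (T : S → A → S) (g : S) (π : S → A) : Prop :=
  ∀ s, dynDist T g π s < ⊤

/-- The loss of `π'` relative to `π` from start state `s`:
`L_π(π', s) = ∑_{i=0}^{d^{π'}(s)-1} γ^i * d^π((stepMap T π')^[i] s)`. -/
noncomputable def lossOf {S A : Type*} (T : S → A → S) (g : S) (γ : ℝ)
    (π π' : S → A) (s : S) : ℝ :=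
  ∑ i ∈ Finset.range (dynDist T g π' s).toNat,
    γ ^ i * ((dynDist T g π ((stepMap T π')^[i] s)).toNat : ℝ)

/-- `π'` is optimal with respect to the reward `-d^π`. -/
def OptimalWrt {S A : Type*} (T : S → A → S) (g : S) (γ : ℝ) (π π' : S → A) : Prop :=
  ReachesEverywhere T g π' ∧
    ∀ π'' : S → A, ReachesEverywhere T g π'' → ∀ s, lossOf T g γ π π' s ≤ lossOf T g γ π π'' s

/-- The optimal dynamical distance: the infimum of `d^π(s)` over all policies. -/
noncomputable def optDist {S A : Type*} (T : S → A → S) (g : S) (s : S) : ℕ∞ :=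
  ⨅ π : S → A, dynDist T g π s

namespace Stmt1Aux

variable {S A : Type*}

lemma dynDist_eq (T : S → A → S) (g : S) (π : S → A) (s : S)
    (h : ∃ m : ℕ, (stepMap T π)^[m] s = g) :
    dynDist T g π s = ((sInf {m : ℕ | (stepMap T π)^[m] s = g} : ℕ) : ℕ∞) := by
  refine le_antisymm (sInf_le ⟨_, rfl, Nat.sInf_mem h⟩) (le_sInf ?_)
  rintro n ⟨m, rfl, hm⟩
  exact_mod_cast Nat.sInf_le hm

lemma reaches_iff (T : S → A → S) (g : S) (π : S → A) (s : S) :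
    dynDist T g π s < ⊤ ↔ ∃ m : ℕ, (stepMap T π)^[m] s = g := by
  constructor
  · intro h
    by_contra hc
    push_neg at hc
    have he : {n : ℕ∞ | ∃ m : ℕ, n = (m : ℕ∞) ∧ (stepMap T π)^[m] s = g} = ∅ := by
      ext n
      simp only [Set.mem_setOf_eq, Set.mem_empty_iff_false, iff_false, not_exists]
      rintro m ⟨rfl, hm⟩
      exact hc m hm
    rw [dynDist, he, sInf_empty] at h
    exact lt_irrefl _ h
  · intro h
    rw [dynDist_eq T g π s h]
    exact lt_of_lt_of_le (ENat.coe_lt_top _) le_rfl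

lemma D_spec (T : S → A → S) (g : S) (π : S → A) (s : S)
    (h : ∃ m : ℕ, (stepMap T π)^[m] s = g) :
    (stepMap T π)^[(dynDist T g π s).toNat] s = g ∧
      ∀ k < (dynDist T g π s).toNat, (stepMap T π)^[k] s ≠ g := by
  rw [dynDist_eq T g π s h, ENat.toNat_coe]
  exact ⟨Nat.sInf_mem h, fun k hk => Nat.notMem_of_lt_sInf hk⟩

lemma D_eq (T : S → A → S) (g : S) (π : S → A) (s : S) (n : ℕ)
    (h1 : (stepMap T π)^[n] s = g) (h2 : ∀ k < n, (stepMap T π)^[k] s ≠ g) :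
    (dynDist T g π s).toNat = n := by
  rw [dynDist_eq T g π s ⟨n, h1⟩, ENat.toNat_coe]
  refine le_antisymm (Nat.sInf_le h1) ?_
  by_contra hc
  push_neg at hc
  have hmem : sInf {m : ℕ | (stepMap T π)^[m] s = g} ∈ {m : ℕ | (stepMap T π)^[m] s = g} :=
    Nat.sInf_mem ⟨n, h1⟩
  exact h2 _ hc hmem

lemma iterate_g (T : S → A → S) (g : S) (hg : ∀ a : A, T g a = g) (π : S → A) (k : ℕ) :
    (stepMap T π)^[k] g = g :=
  Function.iterate_fixed (hg (π g)) k

lemma iterate_of_ge (T : S → A → S) (g : S) (hg : ∀ a : A, T g a = g) (π : S → A) (s : S)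
    (h : ∃ m : ℕ, (stepMap T π)^[m] s = g) (k : ℕ)
    (hk : (dynDist T g π s).toNat ≤ k) : (stepMap T π)^[k] s = g := by
  have h1 := (D_spec T g π s h).1
  calc (stepMap T π)^[k] s
      = (stepMap T π)^[k - (dynDist T g π s).toNat] ((stepMap T π)^[(dynDist T g π s).toNat] s) := by
        rw [← Function.iterate_add_apply, Nat.sub_add_cancel hk]
    _ = g := by rw [h1]; exact iterate_g T g hg π _

lemma D_iterate (T : S → A → S) (g : S) (hg : ∀ a : A, T g a = g) (π : S → A) (s : S)
    (h : ∃ m : ℕ, (stepMap T π)^[m] s = g) (k : ℕ) :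
    (dynDist T g π ((stepMap T π)^[k] s)).toNat = (dynDist T g π s).toNat - k := by
  set n := (dynDist T g π s).toNat with hn
  obtain ⟨h1, h2⟩ := D_spec T g π s h
  rcases le_or_gt k n with hk | hk
  · apply D_eq
    · rw [← Function.iterate_add_apply, Nat.sub_add_cancel hk]
      exact h1
    · intro j hj
      rw [← Function.iterate_add_apply]
      exact h2 _ (by omega)
  · have : (stepMap T π)^[k] s = g := iterate_of_ge T g hg π s h k (by omega)
    rw [this]
    have h0 : (dynDist T g π g).toNat = 0 :=
      D_eq T g π g 0 rfl (by omega)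
    rw [h0]
    omega

lemma D_pos (T : S → A → S) (g : S) (π : S → A) (s : S)
    (h : ∃ m : ℕ, (stepMap T π)^[m] s = g) (hs : s ≠ g) :
    0 < (dynDist T g π s).toNat := by
  rcases Nat.eq_zero_or_pos (dynDist T g π s).toNat with h0 | h0
  · exfalso
    have h1 := (D_spec T g π s h).1
    rw [h0] at h1
    exact hs h1
  · exact h0

lemma dynDist_eq_coe (T : S → A → S) (g : S) (π : S → A) (s : S)
    (h : dynDist T g π s < ⊤) : dynDist T g π s = ((dynDist T g π s).toNat : ℕ∞) :=
  (ENat.coe_toNat h.ne).symm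

/-- `φ(n) = ∑_{i<n} γ^i (n-i)`, the loss of an exact-distance policy. -/
noncomputable def phi (γ : ℝ) (n : ℕ) : ℝ :=
  ∑ i ∈ Finset.range n, γ ^ i * ((n - i : ℕ) : ℝ)

lemma phi_succ (γ : ℝ) (n : ℕ) : phi γ (n + 1) = ((n + 1 : ℕ) : ℝ) + γ * phi γ n := by
  unfold phi
  rw [Finset.sum_range_succ', Finset.mul_sum]
  rw [add_comm]
  congr 1
  · simp
  · apply Finset.sum_congr rfl
    intro i hi
    have hni : n + 1 - (i + 1) = n - i := by omega
    rw [hni, pow_succ]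
    ring

lemma phi_strictMono (γ : ℝ) (hγ0 : 0 < γ) : StrictMono (phi γ) := by
  apply strictMono_nat_of_lt_succ
  intro n
  unfold phi
  rw [Finset.sum_range_succ]
  have h1 : ∑ i ∈ Finset.range n, γ ^ i * ((n - i : ℕ) : ℝ) ≤
      ∑ i ∈ Finset.range n, γ ^ i * ((n + 1 - i : ℕ) : ℝ) := by
    apply Finset.sum_le_sum
    intro i hi
    have hc : ((n - i : ℕ) : ℝ) ≤ ((n + 1 - i : ℕ) : ℝ) := by
      exact_mod_cast Nat.sub_le_sub_right (Nat.le_succ n) i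
    exact mul_le_mul_of_nonneg_left hc (pow_nonneg hγ0.le i)
  have h2 : (0 : ℝ) < γ ^ n * ((n + 1 - n : ℕ) : ℝ) := by
    have : n + 1 - n = 1 := by omega
    rw [this]
    simpa using pow_pos hγ0 n
  linarith

/-- The key step inequality: `d^π(t) ≤ 1 + d^π(T t a)` for every `t ≠ g` and action `a`. -/
lemma key (T : S → A → S) (g : S) (hg : ∀ a : A, T g a = g)
    (γ : ℝ) (hγ0 : 0 < γ)
    (π π' : S → A)
    (hπ : ReachesEverywhere T g π)
    (hπ' : OptimalWrt T g γ π π')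
    (heq : ∀ s : S, dynDist T g π' s = dynDist T g π s)
    (t : S) (hts : t ≠ g) (a : A) :
    (dynDist T g π t).toNat ≤ 1 + (dynDist T g π (T t a)).toNat := by
  classical
  set u := T t a with hu
  have reach' : ∀ s : S, ∃ m : ℕ, (stepMap T π')^[m] s = g := fun s =>
    (reaches_iff T g π' s).mp (by rw [heq]; exact hπ s)
  have hD : ∀ s : S, (dynDist T g π' s).toNat = (dynDist T g π s).toNat := fun s => by
    rw [heq]
  by_cases hcase : ∃ j : ℕ, (stepMap T π')^[j] u = t
  · obtain ⟨j, hj⟩ := hcase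
    set du := (dynDist T g π' u).toNat with hdu
    have hjlt : j < du := by
      by_contra hge
      push_neg at hge
      have : (stepMap T π')^[j] u = g := iterate_of_ge T g hg π' u (reach' u) j hge
      exact hts (hj ▸ this)
    have ht' : (dynDist T g π' t).toNat = du - j := by
      rw [← hj]
      exact D_iterate T g hg π' u (reach' u) j
    have h1 := hD t
    have h2 := hD u
    omega
  · push_neg at hcase
    set p3 := Function.update π' t a with hp3
    have step3_t : stepMap T p3 t = u := by
      simp [stepMap, hp3, hu, Function.update_self]
    have step3_ne : ∀ s : S, s ≠ t → stepMap T p3 s = stepMap T π' s := by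
      intro s hs
      simp [stepMap, hp3, Function.update_of_ne hs]
    have iter3 : ∀ i : ℕ, (stepMap T p3)^[i + 1] t = (stepMap T π')^[i] u := by
      intro i
      induction i with
      | zero => simpa using step3_t
      | succ i ih =>
        rw [Function.iterate_succ_apply' (stepMap T p3) (i + 1) t, ih,
          step3_ne _ (hcase i)]
        exact (Function.iterate_succ_apply' (stepMap T π') i u).symm
    set du := (dynDist T g π' u).toNat with hdu
    obtain ⟨specu1, specu2⟩ := D_spec T g π' u (reach' u)
    have D3t : (dynDist T g p3 t).toNat = du + 1 := by
      apply D_eq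
      · rw [iter3 du]; exact specu1
      · intro k hk
        cases k with
        | zero => simpa using hts
        | succ i =>
          rw [iter3 i]
          exact specu2 i (by omega)
    have reach3 : ReachesEverywhere T g p3 := by
      have H : ∀ n : ℕ, ∀ s : S, (dynDist T g π' s).toNat ≤ n →
          ∃ m : ℕ, (stepMap T p3)^[m] s = g := by
        intro n
        induction n with
        | zero =>
          intro s hs
          have h1 := (D_spec T g π' s (reach' s)).1
          rw [Nat.le_zero.mp hs] at h1
          exact ⟨0, h1⟩
        | succ n IH =>
          intro s hs
          by_cases hsg : s = g
          · exact ⟨0, hsg⟩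
          by_cases hst : s = t
          · subst hst
            exact ⟨du + 1, by rw [iter3 du]; exact specu1⟩
          · have hpos := D_pos T g π' s (reach' s) hsg
            have hdec : (dynDist T g π' (stepMap T π' s)).toNat ≤ n := by
              have hit := D_iterate T g hg π' s (reach' s) 1
              rw [Function.iterate_one] at hit
              omega
            obtain ⟨m, hm⟩ := IH (stepMap T π' s) hdec
            refine ⟨m + 1, ?_⟩
            rw [Function.iterate_succ_apply, step3_ne s hst]
            exact hm
      intro s
      rw [reaches_iff]
      exact H _ s le_rfl
    set dt := (dynDist T g π' t).toNat with hdt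
    have loss' : lossOf T g γ π π' t = phi γ dt := by
      unfold lossOf phi
      rw [← hdt]
      apply Finset.sum_congr rfl
      intro i hi
      rw [Finset.mem_range] at hi
      have h1 : (dynDist T g π ((stepMap T π')^[i] t)).toNat = dt - i := by
        rw [← hD, D_iterate T g hg π' t (reach' t) i]
      rw [h1]
    have loss3 : lossOf T g γ π p3 t =
        γ * phi γ du + ((dynDist T g π t).toNat : ℝ) := by
      unfold lossOf
      rw [D3t, Finset.sum_range_succ']
      congr 1
      · rw [phi, Finset.mul_sum]
        apply Finset.sum_congr rfl
        intro i hi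
        rw [Finset.mem_range] at hi
        have h1 : (dynDist T g π ((stepMap T p3)^[i + 1] t)).toNat = du - i := by
          rw [iter3 i, ← hD, D_iterate T g hg π' u (reach' u) i]
        rw [h1, pow_succ]
        ring
      · simp
    have hopt := hπ'.2 p3 reach3 t
    rw [loss', loss3] at hopt
    have hdtm : dt = (dynDist T g π t).toNat := hD t
    have hdum : du = (dynDist T g π u).toNat := hD u
    rcases Nat.eq_zero_or_pos dt with h0 | hpos
    · omega
    · obtain ⟨k, hk⟩ : ∃ k : ℕ, dt = k + 1 := ⟨dt - 1, by omega⟩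
      rw [hk, phi_succ] at hopt
      have hcast : ((dynDist T g π t).toNat : ℝ) = ((k + 1 : ℕ) : ℝ) := by
        rw [← hdtm, hk]
      rw [hcast] at hopt
      have hphile : phi γ k ≤ phi γ du := by
        have := (mul_le_mul_iff_right₀ hγ0).mp (by linarith : γ * phi γ k ≤ γ * phi γ du)
        exact this
      have hkdu : k ≤ du := ((phi_strictMono γ hγ0).le_iff_le).mp hphile
      omega

end Stmt1Aux

theorem stmt1 {S A : Type*} [Nonempty S] [Nonempty A]
    (T : S → A → S) (g : S) (hg : ∀ a : A, T g a = g)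
    (γ : ℝ) (hγ0 : 0 < γ) (hγ1 : γ ≤ 1)
    (π π' : S → A)
    (hπ : ReachesEverywhere T g π)
    (hπ' : OptimalWrt T g γ π π')
    (heq : ∀ s : S, dynDist T g π' s = dynDist T g π s) :
    ∀ s : S, dynDist T g π s = optDist T g s := by
  intro s
  refine le_antisymm (le_iInf ?_) (iInf_le _ π)
  intro σ
  rcases eq_top_or_lt_top (dynDist T g σ s) with h | h
  · rw [h]; exact le_top
  have claim : ∀ n : ℕ, ∀ s : S, (stepMap T σ)^[n] s = g →
      (dynDist T g π s).toNat ≤ n := by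
    intro n
    induction n with
    | zero =>
      intro s hs
      have : (dynDist T g π s).toNat = 0 := by
        apply Stmt1Aux.D_eq T g π s 0 hs (by omega)
      omega
    | succ n IH =>
      intro s hs
      by_cases hsg : s = g
      · have : (dynDist T g π s).toNat = 0 := by
          apply Stmt1Aux.D_eq T g π s 0 (by simp [hsg]) (by omega)
        omega
      · have h1 : (stepMap T σ)^[n] (stepMap T σ s) = g := by
          rw [← Function.iterate_succ_apply]; exact hs
        have h2 := IH _ h1
        have h3 := Stmt1Aux.key T g hg γ hγ0 π π' hπ hπ' heq s hsg (σ s)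
        have h4 : stepMap T σ s = T s (σ s) := rfl
        rw [h4] at h2
        omega
  obtain ⟨hσ1, hσ2⟩ := Stmt1Aux.D_spec T g σ s ((Stmt1Aux.reaches_iff T g σ s).mp h)
  have h5 := claim _ s hσ1
  calc dynDist T g π s = ((dynDist T g π s).toNat : ℕ∞) :=
        Stmt1Aux.dynDist_eq_coe T g π s (hπ s)
    _ ≤ ((dynDist T g σ s).toNat : ℕ∞) := by exact_mod_cast h5
    _ = dynDist T g σ s := (Stmt1Aux.dynDist_eq_coe T g σ s h).symm
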